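/- Let X ∈ ℝ^{n×n} be a rank-r matrix that is {μ₁,μ₂}-incoherent. Suppose I is a multiset of row indices obtained by drawing |I| ≥ 10 μ₁ r log(n) indices i.i.d. uniformly from {1,…,n} (sampling with replacement), and J is a multiset of column indices obtained by drawing |J| ≥ 10 μ₂ r log(n) indices i.i.d. uniformly from {1,…,n}. Then with probability at least 1 − 4r/n², the submatrix U = [X]_{I,J} satisfies rank(U) = rank(X). -/

import Mathlib

open Matrix
open scoped Classical

/-- Probability of the event `P` under the uniform distribution on the finite
type `α` (counting measure normalized). -/
noncomputable def unifProb {α : Type*} [Fintype α] (P : α → Prop) : ℝ :=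
  ((Finset.univ.filter P).card : ℝ) / (Fintype.card α : ℝ)

namespace USRI

open Finset Module

lemma unifProb_eq_one {α : Type*} [Fintype α] [Nonempty α] {P : α → Prop} (h : ∀ x, P x) :
    unifProb P = 1 := by
  rw [unifProb, Finset.filter_true_of_mem (fun x _ => h x), Finset.card_univ, div_self]
  have : 0 < Fintype.card α := Fintype.card_pos
  exact_mod_cast this.ne'

lemma unifProb_ge_of_card {α : Type*} [Fintype α] (P : α → Prop) (s : Finset α)
    (hs : ∀ x ∈ s, P x) (c : ℝ) (h0 : 0 < (Fintype.card α : ℝ))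
    (hc : c * (Fintype.card α : ℝ) ≤ (s.card : ℝ)) :
    c ≤ unifProb P := by
  rw [unifProb, le_div_iff₀ h0]
  refine le_trans hc ?_
  have hsub : s ⊆ Finset.univ.filter P :=
    fun x hx => Finset.mem_filter.mpr ⟨Finset.mem_univ x, hs x hx⟩
  exact_mod_cast Finset.card_le_card hsub


-- counting lemma
lemma count_notmem (n r : ℕ) (μ : ℝ) (hn : 0 < n)
    (w : Fin n → EuclideanSpace ℝ (Fin r))
    (hsum : ∀ x : EuclideanSpace ℝ (Fin r), ∑ i, (inner ℝ (w i) x : ℝ) ^ 2 = ‖x‖ ^ 2)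
    (hinc : ∀ i, ‖w i‖ ^ 2 ≤ μ * r / n)
    (S : Submodule ℝ (EuclideanSpace ℝ (Fin r))) :
    (r : ℝ) - (finrank ℝ S) ≤
      (μ * r / n) * ((Finset.univ.filter (fun i => w i ∉ S)).card) := by
  classical
  set m := finrank ℝ ↥Sᗮ with hm
  have hdim : finrank ℝ ↥S + m = r := by
    simpa [finrank_euclideanSpace_fin] using Submodule.finrank_add_finrank_orthogonal S
  set b := stdOrthonormalBasis ℝ ↥Sᗮ with hb0
  have hb : Orthonormal ℝ (fun j : Fin m => ((b j : EuclideanSpace ℝ (Fin r)))) :=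
    b.orthonormal.comp_linearIsometry Sᗮ.subtypeₗᵢ
  have key : (m : ℝ) = ∑ i, ∑ j : Fin m,
      (inner ℝ (w i) ((b j : EuclideanSpace ℝ (Fin r))) : ℝ) ^ 2 := by
    rw [Finset.sum_comm]
    have h1 : ∀ j : Fin m, ∑ i, (inner ℝ (w i) ((b j : EuclideanSpace ℝ (Fin r))) : ℝ) ^ 2 = 1 := by
      intro j
      rw [hsum]
      rw [hb.1 j]
      norm_num
    rw [Finset.sum_congr rfl (fun j _ => h1 j)]
    simp
  have hzero : ∀ i, w i ∈ S → ∑ j : Fin m,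
      (inner ℝ (w i) ((b j : EuclideanSpace ℝ (Fin r))) : ℝ) ^ 2 = 0 := by
    intro i hi
    apply Finset.sum_eq_zero
    intro j _
    have hbj : ((b j : EuclideanSpace ℝ (Fin r))) ∈ Sᗮ := (b j).2
    rw [(Submodule.mem_orthogonal S _).mp hbj (w i) hi]
    norm_num
  have hbound : ∀ i, ∑ j : Fin m,
      (inner ℝ (w i) ((b j : EuclideanSpace ℝ (Fin r))) : ℝ) ^ 2 ≤ μ * r / n := by
    intro i
    refine le_trans ?_ (hinc i)
    have := hb.sum_inner_products_le (𝕜 := ℝ) (x := w i) (s := Finset.univ)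
    refine le_trans (le_of_eq ?_) this
    apply Finset.sum_congr rfl
    intro j _
    rw [real_inner_comm, Real.norm_eq_abs, sq_abs]
  have hsplit : (m : ℝ) ≤ (μ * r / n) * ((Finset.univ.filter (fun i => w i ∉ S)).card) := by
    rw [key]
    rw [← Finset.sum_filter_add_sum_filter_not Finset.univ (fun i => w i ∉ S)]
    have h2 : ∑ i ∈ Finset.univ.filter (fun i => ¬ w i ∉ S), ∑ j : Fin m,
        (inner ℝ (w i) ((b j : EuclideanSpace ℝ (Fin r))) : ℝ) ^ 2 = 0 := by
      apply Finset.sum_eq_zero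
      intro i hi
      simp only [Finset.mem_filter, not_not] at hi
      exact hzero i hi.2
    rw [h2, add_zero]
    calc ∑ i ∈ Finset.univ.filter (fun i => w i ∉ S), ∑ j : Fin m,
        (inner ℝ (w i) ((b j : EuclideanSpace ℝ (Fin r))) : ℝ) ^ 2
        ≤ ∑ i ∈ Finset.univ.filter (fun i => w i ∉ S), (μ * r / n) :=
          Finset.sum_le_sum (fun i _ => hbound i)
      _ = ((Finset.univ.filter (fun i => w i ∉ S)).card) * (μ * r / n) := by
          rw [Finset.sum_const, nsmul_eq_mul]
      _ = (μ * r / n) * ((Finset.univ.filter (fun i => w i ∉ S)).card) := by ring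
  have : (r : ℝ) - (finrank ℝ S) = (m : ℝ) := by
    have := hdim
    push_cast [← this]
    ring
  rw [this]
  exact hsplit

-- the one-step inequality
lemma step_ineq (n r : ℕ) (μ : ℝ) (hn : 0 < n) (hμr : 1 ≤ μ * r)
    (w : Fin n → EuclideanSpace ℝ (Fin r))
    (hsum : ∀ x : EuclideanSpace ℝ (Fin r), ∑ i, (inner ℝ (w i) x : ℝ) ^ 2 = ‖x‖ ^ 2)
    (hinc : ∀ i, ‖w i‖ ^ 2 ≤ μ * r / n)
    (s : Set (EuclideanSpace ℝ (Fin r))) :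
    ∑ i : Fin n, ((r : ℝ) - finrank ℝ (Submodule.span ℝ (insert (w i) s))) ≤
      (n : ℝ) * (1 - 1 / (μ * r)) * ((r : ℝ) - finrank ℝ (Submodule.span ℝ s)) := by
  classical
  set S := Submodule.span ℝ s with hS
  set d := finrank ℝ S with hd
  have hdr : d ≤ r := by
    have h1 : d ≤ finrank ℝ (EuclideanSpace ℝ (Fin r)) := Submodule.finrank_le S
    rwa [finrank_euclideanSpace_fin] at h1
  have hdr' : (0:ℝ) ≤ (r : ℝ) - d := by
    have : (d:ℝ) ≤ r := by exact_mod_cast hdr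
    linarith
  have hmem : ∀ i : Fin n, w i ∈ S →
      ((r : ℝ) - finrank ℝ (Submodule.span ℝ (insert (w i) s))) = (r : ℝ) - d := by
    intro i hi
    rw [Submodule.span_insert_eq_span (hS ▸ hi)]
  have hnotmem : ∀ i : Fin n, w i ∉ S →
      ((r : ℝ) - finrank ℝ (Submodule.span ℝ (insert (w i) s))) = (r : ℝ) - d - 1 := by
    intro i hi
    have hw0 : w i ≠ 0 := fun h => hi (h ▸ S.zero_mem)
    have hinf : (ℝ ∙ (w i)) ⊓ S = ⊥ := by
      rw [eq_bot_iff]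
      rintro y ⟨hy1, hy2⟩
      obtain ⟨c, rfl⟩ := Submodule.mem_span_singleton.mp hy1
      rcases eq_or_ne c 0 with rfl | hc
      · simp
      · exfalso
        apply hi
        have : w i = c⁻¹ • (c • w i) := by rw [smul_smul, inv_mul_cancel₀ hc, one_smul]
        rw [this]
        exact S.smul_mem _ hy2
    have hsup := Submodule.finrank_sup_add_finrank_inf_eq (ℝ ∙ (w i)) S
    rw [hinf] at hsup
    simp only [finrank_bot, add_zero] at hsup
    rw [finrank_span_singleton hw0] at hsup
    rw [Submodule.span_insert, hsup]
    push_cast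
    ring
  -- split the sum
  have hsplit := Finset.sum_filter_add_sum_filter_not Finset.univ (fun i => w i ∉ S)
    (fun i => ((r : ℝ) - finrank ℝ (Submodule.span ℝ (insert (w i) s))))
  set B := (Finset.univ.filter (fun i : Fin n => w i ∉ S)).card with hB
  have h1 : ∑ i ∈ Finset.univ.filter (fun i : Fin n => w i ∉ S),
      ((r : ℝ) - finrank ℝ (Submodule.span ℝ (insert (w i) s))) = B * ((r:ℝ) - d - 1) := by
    rw [Finset.sum_congr rfl (fun i hi => hnotmem i (Finset.mem_filter.mp hi).2)]
    rw [Finset.sum_const, nsmul_eq_mul]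
  have h2 : ∑ i ∈ Finset.univ.filter (fun i : Fin n => ¬ w i ∉ S),
      ((r : ℝ) - finrank ℝ (Submodule.span ℝ (insert (w i) s))) =
      ((Finset.univ.filter (fun i : Fin n => ¬ w i ∉ S)).card) * ((r:ℝ) - d) := by
    rw [Finset.sum_congr rfl (fun i hi => hmem i (not_not.mp (Finset.mem_filter.mp hi).2))]
    rw [Finset.sum_const, nsmul_eq_mul]
  have hcards : B + (Finset.univ.filter (fun i : Fin n => ¬ w i ∉ S)).card = n := by
    rw [hB, Finset.card_filter_add_card_filter_not]
    simp
  -- lower bound on B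
  have hBlow : (r : ℝ) - d ≤ (μ * r / n) * B := count_notmem n r μ hn w hsum hinc S
  have hμpos : (0:ℝ) < μ * r := lt_of_lt_of_le zero_lt_one hμr
  have hnpos : (0:ℝ) < n := by exact_mod_cast hn
  -- conclude
  rw [← hsplit, h1, h2]
  have hc2 : ((Finset.univ.filter (fun i : Fin n => ¬ w i ∉ S)).card : ℝ) = (n : ℝ) - B := by
    have := congrArg (fun x : ℕ => (x : ℝ)) hcards
    push_cast at this
    linarith
  rw [hc2]
  have hkey : (n:ℝ) * ((r:ℝ) - d) ≤ (μ * r) * B := by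
    have h3 := mul_le_mul_of_nonneg_left hBlow (le_of_lt hnpos)
    have h4 : (n:ℝ) * (μ * r / n * B) = (μ * r) * B := by field_simp
    linarith [h4 ▸ h3]
  have hgoal : (n:ℝ) * ((r:ℝ) - d) / (μ * r) ≤ B := by
    rw [div_le_iff₀ hμpos]
    linarith
  have hL : (B:ℝ) * ((r:ℝ) - d - 1) + ((n:ℝ) - B) * ((r:ℝ) - d) = (n:ℝ) * ((r:ℝ) - d) - B := by
    ring
  have hR : (n:ℝ) * (1 - 1 / (μ * r)) * ((r:ℝ) - d) =
      (n:ℝ) * ((r:ℝ) - d) - (n:ℝ) * ((r:ℝ) - d) / (μ * r) := by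
    field_simp
  rw [hL, hR]
  linarith

lemma sum_dim_bound (n r : ℕ) (μ : ℝ) (hn : 0 < n) (hμr : 1 ≤ μ * r)
    (w : Fin n → EuclideanSpace ℝ (Fin r))
    (hsum : ∀ x : EuclideanSpace ℝ (Fin r), ∑ i, (inner ℝ (w i) x : ℝ) ^ 2 = ‖x‖ ^ 2)
    (hinc : ∀ i, ‖w i‖ ^ 2 ≤ μ * r / n) :
    ∀ k : ℕ, ∑ f : Fin k → Fin n,
        ((r : ℝ) - finrank ℝ (Submodule.span ℝ (Set.range (fun t => w (f t)))))
      ≤ (r : ℝ) * ((n : ℝ) * (1 - 1 / (μ * r))) ^ k := by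
  have hq0 : (0:ℝ) ≤ 1 - 1 / (μ * r) := by
    have hμpos : (0:ℝ) < μ * r := lt_of_lt_of_le zero_lt_one hμr
    have : 1 / (μ * r) ≤ 1 := by
      rw [div_le_one hμpos]; exact hμr
    linarith
  have hnq0 : (0:ℝ) ≤ (n : ℝ) * (1 - 1 / (μ * r)) := by positivity
  intro k
  induction k with
  | zero =>
    rw [pow_zero, mul_one]
    have huniq : ∀ f : Fin 0 → Fin n,
        ((r : ℝ) - finrank ℝ (Submodule.span ℝ (Set.range (fun t => w (f t))))) = r := by
      intro f
      have : Set.range (fun t : Fin 0 => w (f t)) = (∅ : Set (EuclideanSpace ℝ (Fin r))) :=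
        Set.range_eq_empty _
      rw [this, Submodule.span_empty, finrank_bot]
      simp
    rw [Finset.sum_congr rfl (fun f _ => huniq f)]
    rw [Finset.sum_const, nsmul_eq_mul]
    simp
  | succ k ih =>
    set e := Fin.consEquiv (fun _ : Fin (k+1) => Fin n) with he
    have hequiv : ∑ f : Fin (k+1) → Fin n,
        ((r : ℝ) - finrank ℝ (Submodule.span ℝ (Set.range (fun t => w (f t))))) =
        ∑ p : Fin n × (Fin k → Fin n),
        ((r : ℝ) - finrank ℝ (Submodule.span ℝ (Set.range (fun t => w (e p t))))) :=
      (Fintype.sum_equiv e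
        (fun p => ((r : ℝ) - finrank ℝ (Submodule.span ℝ (Set.range (fun t => w (e p t))))))
        (fun f => ((r : ℝ) - finrank ℝ (Submodule.span ℝ (Set.range (fun t => w (f t))))))
        (fun p => rfl)).symm
    rw [hequiv, Fintype.sum_prod_type_right]
    have hrange : ∀ (i : Fin n) (g : Fin k → Fin n),
        (Set.range (fun t => w (e (i, g) t))) =
          insert (w i) (Set.range (fun t => w (g t))) := by
      intro i g
      have h1 : (fun t => w (e (i, g) t)) = Fin.cons (w i) (fun t => w (g t)) := by
        funext t
        refine Fin.cases ?_ (fun t' => ?_) t <;> simp [he, Fin.consEquiv]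
      rw [h1, Fin.range_cons]
    calc ∑ g : Fin k → Fin n, ∑ i : Fin n,
          ((r : ℝ) - finrank ℝ (Submodule.span ℝ (Set.range (fun t => w (e (i, g) t)))))
        ≤ ∑ g : Fin k → Fin n, (n : ℝ) * (1 - 1 / (μ * r)) *
          ((r : ℝ) - finrank ℝ (Submodule.span ℝ (Set.range (fun t => w (g t))))) := by
          apply Finset.sum_le_sum
          intro g _
          have h2 : ∑ i : Fin n,
              ((r : ℝ) - finrank ℝ (Submodule.span ℝ (Set.range (fun t => w (e (i, g) t))))) =
              ∑ i : Fin n, ((r : ℝ) - finrank ℝ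
                (Submodule.span ℝ (insert (w i) (Set.range (fun t => w (g t)))))) := by
            apply Finset.sum_congr rfl
            intro i _
            rw [hrange i g]
          rw [h2]
          exact step_ineq n r μ hn hμr w hsum hinc _
      _ = (n : ℝ) * (1 - 1 / (μ * r)) * ∑ g : Fin k → Fin n,
          ((r : ℝ) - finrank ℝ (Submodule.span ℝ (Set.range (fun t => w (g t))))) := by
          rw [Finset.mul_sum]
      _ ≤ (n : ℝ) * (1 - 1 / (μ * r)) * ((r : ℝ) * ((n : ℝ) * (1 - 1 / (μ * r))) ^ k) :=
          mul_le_mul_of_nonneg_left ih hnq0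
      _ = (r : ℝ) * ((n : ℝ) * (1 - 1 / (μ * r))) ^ (k+1) := by ring

lemma side_count (n r k : ℕ) (hn : 0 < n) (hr : 0 < r) (μ : ℝ)
    (W : Matrix (Fin n) (Fin r) ℝ) (hortho : Wᵀ * W = 1)
    (hinc : ∀ i, Real.sqrt (∑ j, (W i j) ^ 2) ≤ Real.sqrt (μ * r / n))
    (hk : (k : ℝ) ≥ 10 * μ * r * Real.log n) :
    ((Finset.univ.filter
        (fun f : Fin k → Fin n => (W.submatrix f id).rank ≠ r)).card : ℝ)
      ≤ (n : ℝ) ^ k * r / (n : ℝ) ^ 2 := by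
  classical
  have hnR : (0:ℝ) < n := by exact_mod_cast hn
  have hrR : (0:ℝ) < r := by exact_mod_cast hr
  -- entries of Wᵀ * W
  have hone : ∀ j j' : Fin r, ∑ i, W i j * W i j' = if j = j' then 1 else 0 := by
    intro j j'
    have h0 := congrFun (congrFun hortho j) j'
    simpa [Matrix.mul_apply, Matrix.transpose_apply, Matrix.one_apply] using h0
  -- nonnegativity of the incoherence bound
  have hc0 : (0:ℝ) ≤ μ * r / n := by
    by_contra hneg
    push_neg at hneg
    have hz : ∀ i j, W i j = 0 := by
      intro i j
      have h1 : Real.sqrt (μ * r / n) = 0 := Real.sqrt_eq_zero_of_nonpos (le_of_lt hneg)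
      have h2 : Real.sqrt (∑ j, (W i j) ^ 2) = 0 :=
        le_antisymm (h1 ▸ hinc i) (Real.sqrt_nonneg _)
      have h3 : ∑ j, (W i j) ^ 2 = 0 := by
        have h4 : (0:ℝ) ≤ ∑ j, (W i j) ^ 2 := by positivity
        have := (Real.sqrt_eq_zero h4).mp h2
        exact this
      have h5 := (Finset.sum_eq_zero_iff_of_nonneg
        (fun j _ => sq_nonneg (W i j))).mp h3 j (Finset.mem_univ j)
      exact sq_eq_zero_iff.mp h5
    have h6 := hone ⟨0, hr⟩ ⟨0, hr⟩
    simp [hz] at h6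
  have hinc' : ∀ i, ∑ j, (W i j) ^ 2 ≤ μ * r / n := by
    intro i
    calc ∑ j, (W i j) ^ 2 = Real.sqrt (∑ j, (W i j) ^ 2) ^ 2 :=
          (Real.sq_sqrt (by positivity)).symm
      _ ≤ Real.sqrt (μ * r / n) ^ 2 := by
          apply pow_le_pow_left₀ (Real.sqrt_nonneg _) (hinc i)
      _ = μ * r / n := Real.sq_sqrt hc0
  -- trace identity and μ ≥ 1
  have htrace : ∑ i, ∑ j, (W i j) ^ 2 = (r : ℝ) := by
    rw [Finset.sum_comm]
    have h1 : ∀ j : Fin r, ∑ i, (W i j) ^ 2 = 1 := by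
      intro j
      have := hone j j
      rw [if_pos rfl] at this
      rw [← this]
      apply Finset.sum_congr rfl
      intro i _
      ring
    rw [Finset.sum_congr rfl (fun j _ => h1 j)]
    simp
  have hμr : 1 ≤ μ * r := by
    have h2 : ∑ i, ∑ j, (W i j) ^ 2 ≤ (n:ℝ) * (μ * r / n) := by
      calc ∑ i, ∑ j, (W i j) ^ 2 ≤ ∑ i : Fin n, (μ * r / n) :=
            Finset.sum_le_sum (fun i _ => hinc' i)
        _ = (n:ℝ) * (μ * r / n) := by rw [Finset.sum_const, nsmul_eq_mul]; simp
    have h3 : (n:ℝ) * (μ * r / n) = μ * r := by field_simp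
    have h1 : (r:ℝ) ≤ μ * r := by rw [← h3]; rw [htrace] at h2; exact h2
    have hr1 : (1:ℝ) ≤ r := by exact_mod_cast hr
    have hμ1 : 1 ≤ μ := by
      by_contra hμ
      push_neg at hμ
      nlinarith
    nlinarith
  -- the Euclidean rows
  set L := (WithLp.linearEquiv 2 ℝ (Fin r → ℝ)).symm with hL
  set w : Fin n → EuclideanSpace ℝ (Fin r) := fun i => L (W i) with hw
  have happ : ∀ i j, w i j = W i j := fun i j => rfl
  have hnorm : ∀ x : EuclideanSpace ℝ (Fin r), ‖x‖ ^ 2 = ∑ j, (x j) ^ 2 := by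
    intro x
    rw [EuclideanSpace.norm_eq]
    rw [Real.sq_sqrt (by positivity)]
    apply Finset.sum_congr rfl
    intro j _
    rw [Real.norm_eq_abs, sq_abs]
  have hinner : ∀ (i : Fin n) (x : EuclideanSpace ℝ (Fin r)),
      (inner ℝ (w i) x : ℝ) = ∑ j, W i j * x j := by
    intro i x
    rw [PiLp.inner_apply]
    apply Finset.sum_congr rfl
    intro j _
    rw [happ]
    exact Real.inner_apply _ _
  have hsum : ∀ x : EuclideanSpace ℝ (Fin r), ∑ i, (inner ℝ (w i) x : ℝ) ^ 2 = ‖x‖ ^ 2 := by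
    intro x
    rw [hnorm x]
    calc ∑ i, (inner ℝ (w i) x : ℝ) ^ 2
        = ∑ i, ∑ j, ∑ j', (W i j * W i j') * (x j * x j') := by
          apply Finset.sum_congr rfl
          intro i _
          rw [hinner, sq, Finset.sum_mul_sum]
          apply Finset.sum_congr rfl; intro j _
          apply Finset.sum_congr rfl; intro j' _
          ring
      _ = ∑ j, ∑ j', (∑ i, W i j * W i j') * (x j * x j') := by
          rw [Finset.sum_comm]
          apply Finset.sum_congr rfl; intro j _
          rw [Finset.sum_comm]
          apply Finset.sum_congr rfl; intro j' _
          rw [Finset.sum_mul]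
      _ = ∑ j, (x j) ^ 2 := by
          apply Finset.sum_congr rfl; intro j _
          rw [Finset.sum_congr rfl (fun j' _ => by rw [hone j j'])]
          simp [Finset.sum_ite_eq, sq]
  have hwinc : ∀ i, ‖w i‖ ^ 2 ≤ μ * r / n := by
    intro i
    rw [hnorm]
    exact hinc' i
  -- rank = finrank of span of chosen rows
  have hrank : ∀ f : Fin k → Fin n, (W.submatrix f id).rank =
      finrank ℝ (Submodule.span ℝ (Set.range (fun t => w (f t)))) := by
    intro f
    have h1 : (W.submatrix f id).rank = (W.submatrix f id)ᵀ.rank :=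
      (Matrix.rank_transpose _).symm
    rw [h1, Matrix.rank_eq_finrank_span_cols, Matrix.col_transpose, Matrix.row]
    have h2 : Submodule.map (L.toLinearMap)
        (Submodule.span ℝ (Set.range (W.submatrix f id))) =
        Submodule.span ℝ (Set.range (fun t => w (f t))) := by
      rw [Submodule.map_span]
      congr 1
      exact (Set.range_comp _ _).symm
    rw [← LinearEquiv.finrank_map_eq L (Submodule.span ℝ (Set.range (W.submatrix f id))), h2]
  -- bad count vs sum of deficiencies
  set dfun : (Fin k → Fin n) → ℕ :=
    fun f => finrank ℝ (Submodule.span ℝ (Set.range (fun t => w (f t)))) with hdfun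
  have hdle : ∀ f, dfun f ≤ r := by
    intro f
    have h1 : dfun f ≤ finrank ℝ (EuclideanSpace ℝ (Fin r)) := Submodule.finrank_le _
    rwa [finrank_euclideanSpace_fin] at h1
  have hcardsum : ((Finset.univ.filter
      (fun f : Fin k → Fin n => (W.submatrix f id).rank ≠ r)).card : ℝ)
      ≤ ∑ f : Fin k → Fin n, ((r : ℝ) - dfun f) := by
    rw [Finset.card_eq_sum_ones]
    push_cast
    calc (∑ f ∈ Finset.univ.filter
          (fun f : Fin k → Fin n => (W.submatrix f id).rank ≠ r), (1:ℝ))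
        ≤ ∑ f ∈ Finset.univ.filter
          (fun f : Fin k → Fin n => (W.submatrix f id).rank ≠ r), ((r : ℝ) - dfun f) := by
          apply Finset.sum_le_sum
          intro f hf
          have hne := (Finset.mem_filter.mp hf).2
          rw [hrank f] at hne
          have hlt : dfun f < r := lt_of_le_of_ne (hdle f) hne
          have : (dfun f : ℝ) + 1 ≤ r := by exact_mod_cast hlt
          linarith
      _ ≤ ∑ f : Fin k → Fin n, ((r : ℝ) - dfun f) := by
          apply Finset.sum_le_sum_of_subset_of_nonneg (Finset.filter_subset _ _)
          intro f _ _
          have : (dfun f : ℝ) ≤ r := by exact_mod_cast hdle f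
          linarith
  have hmain := sum_dim_bound n r μ hn hμr w hsum hwinc k
  -- final numeric estimate
  have hq0 : (0:ℝ) ≤ 1 - 1 / (μ * r) := by
    have hμpos : (0:ℝ) < μ * r := lt_of_lt_of_le zero_lt_one hμr
    have : 1 / (μ * r) ≤ 1 := by rw [div_le_one hμpos]; exact hμr
    linarith
  have hμpos : (0:ℝ) < μ * r := lt_of_lt_of_le zero_lt_one hμr
  have hqexp : (1 - 1 / (μ * r)) ^ k ≤ Real.exp (-(k / (μ * r))) := by
    calc (1 - 1 / (μ * r)) ^ k ≤ (Real.exp (-(1 / (μ * r)))) ^ k := by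
          apply pow_le_pow_left₀ hq0
          have := Real.add_one_le_exp (-(1 / (μ * r)))
          linarith
      _ = Real.exp (-(k / (μ * r))) := by
          rw [← Real.exp_nat_mul]
          congr 1
          ring
  have hlogn : (0:ℝ) ≤ Real.log n := Real.log_nonneg (by exact_mod_cast hn)
  have hexp2 : Real.exp (-(k / (μ * r))) ≤ 1 / (n:ℝ) ^ 2 := by
    have h1 : 10 * Real.log n ≤ (k : ℝ) / (μ * r) := by
      rw [ge_iff_le] at hk
      rw [le_div_iff₀ hμpos]
      nlinarith
    have h2 : Real.exp (-(k / (μ * r))) ≤ Real.exp (-(10 * Real.log n)) := by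
      apply Real.exp_le_exp.mpr
      linarith
    have h3 : Real.exp (-(10 * Real.log n)) = 1 / (n:ℝ) ^ (10:ℕ) := by
      rw [Real.exp_neg]
      have : (10:ℝ) * Real.log n = (10:ℕ) * Real.log n := by norm_num
      rw [this, Real.exp_nat_mul, Real.exp_log hnR]
      rw [one_div]
    have h4 : (1:ℝ) / (n:ℝ) ^ (10:ℕ) ≤ 1 / (n:ℝ) ^ 2 := by
      apply one_div_le_one_div_of_le (by positivity)
      apply pow_le_pow_right₀ (by exact_mod_cast hn) (by norm_num)
    calc Real.exp (-(k / (μ * r))) ≤ Real.exp (-(10 * Real.log n)) := h2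
      _ = 1 / (n:ℝ) ^ (10:ℕ) := h3
      _ ≤ 1 / (n:ℝ) ^ 2 := h4
  have hfinal : (r:ℝ) * ((n:ℝ) * (1 - 1/(μ*r)))^k ≤ (n:ℝ)^k * r / (n:ℝ)^2 := by
    rw [mul_pow]
    have hq2 : (1 - 1/(μ*r))^k ≤ 1/(n:ℝ)^2 := le_trans hqexp hexp2
    calc (r:ℝ) * ((n:ℝ)^k * (1 - 1/(μ*r))^k) ≤ (r:ℝ) * ((n:ℝ)^k * (1/(n:ℝ)^2)) := by
          apply mul_le_mul_of_nonneg_left _ hrR.le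
          apply mul_le_mul_of_nonneg_left hq2 (by positivity)
      _ = (n:ℝ)^k * r / (n:ℝ)^2 := by ring
  exact le_trans hcardsum (le_trans hmain hfinal)

lemma good_rank {n r kI kJ : ℕ}
    (W V : Matrix (Fin n) (Fin r) ℝ) (σ : Fin r → ℝ) (hσ : ∀ i, 0 < σ i)
    (f : Fin kI → Fin n) (g : Fin kJ → Fin n)
    (hf : (W.submatrix f id).rank = r) (hg : (V.submatrix g id).rank = r) :
    ((W * Matrix.diagonal σ * Vᵀ).submatrix f g).rank = r := by
  classical
  set A := W.submatrix f id with hA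
  set B := V.submatrix g id with hB
  have hsub : (W * Matrix.diagonal σ * Vᵀ).submatrix f g =
      A * (Matrix.diagonal σ * Bᵀ) := by
    rw [show W * Matrix.diagonal σ * Vᵀ = W * (Matrix.diagonal σ * Vᵀ) from Matrix.mul_assoc _ _ _]
    rw [Matrix.submatrix_mul W (Matrix.diagonal σ * Vᵀ) f id g Function.bijective_id]
    congr 1
  rw [hsub]
  -- surjectivity of the right factor
  have hsurj1 : Function.Surjective (Matrix.diagonal σ).mulVecLin := by
    intro y
    refine ⟨fun i => y i / σ i, ?_⟩
    funext i
    rw [Matrix.mulVecLin_apply, Matrix.mulVec_diagonal]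
    rw [mul_comm, div_mul_cancel₀ _ (hσ i).ne']
  have hsurj2 : Function.Surjective (Bᵀ).mulVecLin := by
    rw [← LinearMap.range_eq_top]
    apply Submodule.eq_top_of_finrank_eq
    have h1 : finrank ℝ (LinearMap.range (Bᵀ).mulVecLin) = (Bᵀ).rank := rfl
    rw [h1, Matrix.rank_transpose, hg]
    rw [Module.finrank_fintype_fun_eq_card, Fintype.card_fin]
  have hsurj : Function.Surjective (Matrix.diagonal σ * Bᵀ).mulVecLin := by
    rw [Matrix.mulVecLin_mul]
    exact hsurj1.comp hsurj2
  have hrank : (A * (Matrix.diagonal σ * Bᵀ)).rank = A.rank := by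
    rw [Matrix.rank, Matrix.mulVecLin_mul, LinearMap.range_comp_of_range_eq_top _
      (LinearMap.range_eq_top.mpr hsurj), ← Matrix.rank]
  rw [hrank, hf]

end USRI

open USRI

/-- Let `X ∈ ℝ^{n×n}` be rank-`r` and `{μ₁,μ₂}`-incoherent
(expressed via a compact SVD `X = W Σ Vᵀ` with row-norm bounds on `W` and `V`).
Draw `kI ≥ 10 μ₁ r log n` row indices and `kJ ≥ 10 μ₂ r log n` column indices
i.i.d. uniformly from `[n]` (with replacement, encoded as uniform random
functions `Fin kI → Fin n`, `Fin kJ → Fin n`). Then with probability at least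
`1 − 4r/n²`, the submatrix `U = X[I,J]` satisfies `rank U = rank X`. -/
theorem uniform_sampling_rank_intersection (n r kI kJ : ℕ) (hn : 0 < n)
    (X : Matrix (Fin n) (Fin n) ℝ) (hrank : X.rank = r) (μ₁ μ₂ : ℝ)
    (W V : Matrix (Fin n) (Fin r) ℝ) (σ : Fin r → ℝ) (hσ : ∀ i, 0 < σ i)
    (hX : X = W * Matrix.diagonal σ * Vᵀ)
    (hWortho : Wᵀ * W = 1) (hVortho : Vᵀ * V = 1)
    (hWinc : ∀ i, Real.sqrt (∑ j, (W i j) ^ 2) ≤ Real.sqrt (μ₁ * r / n))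
    (hVinc : ∀ i, Real.sqrt (∑ j, (V i j) ^ 2) ≤ Real.sqrt (μ₂ * r / n))
    (hkI : (kI : ℝ) ≥ 10 * μ₁ * r * Real.log n)
    (hkJ : (kJ : ℝ) ≥ 10 * μ₂ * r * Real.log n) :
    1 - 4 * r / (n : ℝ) ^ 2 ≤
      unifProb (fun fg : (Fin kI → Fin n) × (Fin kJ → Fin n) =>
        (X.submatrix fg.1 fg.2).rank = X.rank) := by
  classical
  have hnR : (0:ℝ) < n := by exact_mod_cast hn
  rcases Nat.eq_zero_or_pos r with hr0 | hr
  · -- r = 0 : X = 0 and the event always holds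
    subst hr0
    have hX0 : X = 0 := by
      rw [hX]
      ext i j
      rw [Matrix.mul_apply]
      simp
    have hall : ∀ fg : (Fin kI → Fin n) × (Fin kJ → Fin n),
        (X.submatrix fg.1 fg.2).rank = X.rank := by
      intro fg
      rw [hX0]
      have h1 : (0 : Matrix (Fin n) (Fin n) ℝ).submatrix fg.1 fg.2 = 0 := rfl
      rw [h1, Matrix.rank_zero, Matrix.rank_zero]
    have : Nonempty ((Fin kI → Fin n) × (Fin kJ → Fin n)) := by
      have : Nonempty (Fin n) := ⟨⟨0, hn⟩⟩
      infer_instance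
    rw [unifProb_eq_one hall]
    have h9 : (0:ℝ) ≤ 4 * ((0:ℕ):ℝ) / (n : ℝ) ^ 2 := by positivity
    linarith
  · -- main case
    have HW := side_count n r kI hn hr μ₁ W hWortho hWinc hkI
    have HV := side_count n r kJ hn hr μ₂ V hVortho hVinc hkJ
    set badF := Finset.univ.filter
      (fun f : Fin kI → Fin n => (W.submatrix f id).rank ≠ r) with hbadF
    set badG := Finset.univ.filter
      (fun g : Fin kJ → Fin n => (V.submatrix g id).rank ≠ r) with hbadG
    set goodF := Finset.univ.filter
      (fun f : Fin kI → Fin n => (W.submatrix f id).rank = r) with hgoodF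
    set goodG := Finset.univ.filter
      (fun g : Fin kJ → Fin n => (V.submatrix g id).rank = r) with hgoodG
    have hcardF : goodF.card + badF.card = n ^ kI := by
      rw [hgoodF, hbadF]
      rw [Finset.card_filter_add_card_filter_not]
      rw [Finset.card_univ, Fintype.card_fun, Fintype.card_fin, Fintype.card_fin]
    have hcardG : goodG.card + badG.card = n ^ kJ := by
      rw [hgoodG, hbadG]
      rw [Finset.card_filter_add_card_filter_not]
      rw [Finset.card_univ, Fintype.card_fun, Fintype.card_fin, Fintype.card_fin]
    have hsubset : goodF ×ˢ goodG ⊆ Finset.univ.filter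
        (fun fg : (Fin kI → Fin n) × (Fin kJ → Fin n) =>
          (X.submatrix fg.1 fg.2).rank = X.rank) := by
      intro fg hfg
      rw [Finset.mem_product] at hfg
      rw [Finset.mem_filter]
      refine ⟨Finset.mem_univ _, ?_⟩
      have hf := (Finset.mem_filter.mp hfg.1).2
      have hg := (Finset.mem_filter.mp hfg.2).2
      rw [hrank, hX]
      exact good_rank W V σ hσ fg.1 fg.2 hf hg
    have hcardle : (goodF.card * goodG.card : ℝ) ≤
        ((Finset.univ.filter
          (fun fg : (Fin kI → Fin n) × (Fin kJ → Fin n) =>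
            (X.submatrix fg.1 fg.2).rank = X.rank)).card : ℝ) := by
      have := Finset.card_le_card hsubset
      rw [Finset.card_product] at this
      exact_mod_cast this
    have hcardα : (Fintype.card ((Fin kI → Fin n) × (Fin kJ → Fin n)) : ℝ) =
        (n:ℝ) ^ kI * (n:ℝ) ^ kJ := by
      rw [Fintype.card_prod, Fintype.card_fun, Fintype.card_fun,
        Fintype.card_fin, Fintype.card_fin, Fintype.card_fin]
      push_cast
      ring
    set N1 := (n:ℝ) ^ kI with hN1
    set N2 := (n:ℝ) ^ kJ with hN2
    have hN1pos : 0 < N1 := by positivity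
    have hN2pos : 0 < N2 := by positivity
    set a := (badF.card : ℝ) with ha
    set b := (badG.card : ℝ) with hb
    have ha0 : 0 ≤ a := by positivity
    have hb0 : 0 ≤ b := by positivity
    have hgF : (goodF.card : ℝ) = N1 - a := by
      have : (goodF.card : ℝ) + a = N1 := by
        rw [ha, hN1]
        exact_mod_cast hcardF
      linarith
    have hgG : (goodG.card : ℝ) = N2 - b := by
      have : (goodG.card : ℝ) + b = N2 := by
        rw [hb, hN2]
        exact_mod_cast hcardG
      linarith
    have hWa : a ≤ N1 * ((r:ℝ) / (n:ℝ)^2) := by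
      rw [ha, hN1]
      calc (badF.card : ℝ) ≤ (n : ℝ) ^ kI * r / (n : ℝ) ^ 2 := HW
        _ = (n:ℝ)^kI * ((r:ℝ)/(n:ℝ)^2) := by ring
    have hVb : b ≤ N2 * ((r:ℝ) / (n:ℝ)^2) := by
      rw [hb, hN2]
      calc (badG.card : ℝ) ≤ (n : ℝ) ^ kJ * r / (n : ℝ) ^ 2 := HV
        _ = (n:ℝ)^kJ * ((r:ℝ)/(n:ℝ)^2) := by ring
    have hkey : (1 - 4 * (r:ℝ) / (n:ℝ)^2) * (N1 * N2) ≤ (N1 - a) * (N2 - b) := by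
      have e1 : a * N2 ≤ ((r:ℝ)/(n:ℝ)^2) * (N1 * N2) := by
        calc a * N2 ≤ (N1 * ((r:ℝ)/(n:ℝ)^2)) * N2 :=
              mul_le_mul_of_nonneg_right hWa hN2pos.le
          _ = ((r:ℝ)/(n:ℝ)^2) * (N1 * N2) := by ring
      have e2 : b * N1 ≤ ((r:ℝ)/(n:ℝ)^2) * (N1 * N2) := by
        calc b * N1 ≤ (N2 * ((r:ℝ)/(n:ℝ)^2)) * N1 :=
              mul_le_mul_of_nonneg_right hVb hN1pos.le
          _ = ((r:ℝ)/(n:ℝ)^2) * (N1 * N2) := by ring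
      have e3 : 0 ≤ a * b := mul_nonneg ha0 hb0
      have e4 : 0 ≤ ((r:ℝ)/(n:ℝ)^2) * (N1 * N2) := by positivity
      have hexp : (N1 - a) * (N2 - b) = N1*N2 - a*N2 - b*N1 + a*b := by ring
      have hlhs : (1 - 4 * (r:ℝ) / (n:ℝ)^2) * (N1 * N2) =
          N1*N2 - 4*(((r:ℝ)/(n:ℝ)^2) * (N1*N2)) := by ring
      rw [hexp, hlhs]
      linarith
    apply unifProb_ge_of_card _ (goodF ×ˢ goodG)
    · intro fg hfg
      rw [Finset.mem_product] at hfg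
      have hf := (Finset.mem_filter.mp hfg.1).2
      have hg := (Finset.mem_filter.mp hfg.2).2
      rw [hrank, hX]
      exact good_rank W V σ hσ fg.1 fg.2 hf hg
    · rw [hcardα]; positivity
    · rw [hcardα, Finset.card_product]
      push_cast
      rw [hgF, hgG]
      exact hkey
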